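/- For every integer N ≥ 0, set H_{2N+2} = −π²/8 + (1 + Σ_{k=0}^{2N} (−1)^k T_{k+1}/4^{k+1}). Then 0 < H_{2N+2} < T_{2N+2}/4^{2N+2}, and for every real x with −1 < x < 1: (8/π²)·[ 1/(1 − x²) + Σ_{k=0}^{2N+1} (−1)^k (T_{k+1}/4^{k+1})(1 − x²)^k ] ≤ tan(πx/2)/(πx/2) ≤ (8/π²)·[ 1/(1 − x²) + Σ_{k=0}^{2N} (−1)^k (T_{k+1}/4^{k+1})(1 − x²)^k − H_{2N+2}·(1 − x²)^{2N+1} ]. -/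

import Mathlib

open Real

/-- `T p = Σ_{n=1}^∞ 1/(n^p (n+1)^p)`. -/
noncomputable def T (p : ℕ) : ℝ := ∑' n : ℕ, 1 / (((n : ℝ) + 1) ^ p * ((n : ℝ) + 2) ^ p)

/-- `tan(πx/2)/(πx/2)`, understood to equal `1` at `x = 0`. -/
noncomputable def tanc (x : ℝ) : ℝ :=
  if x = 0 then 1 else Real.tan (π * x / 2) / (π * x / 2)


open Filter Topology
noncomputable def bb (m : ℕ) : ℝ := 4 * ((m : ℝ) + 1) * ((m : ℝ) + 2)

lemma bb_pos (m : ℕ) : 0 < bb m := by unfold bb; positivity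

lemma bb_ge (m : ℕ) : ((m : ℝ) + 1) ^ 2 ≤ bb m := by
  unfold bb; nlinarith [Nat.cast_nonneg (α := ℝ) m]

lemma bb_ge_one (m : ℕ) : 1 ≤ bb m := by
  have := bb_ge m; nlinarith [Nat.cast_nonneg (α := ℝ) m]

lemma sum_base : Summable (fun m : ℕ => 1 / ((m : ℝ) + 1) ^ 2) := by
  have h : Summable (fun n : ℕ => 1 / (n : ℝ) ^ 2) :=
    Real.summable_one_div_nat_pow.mpr one_lt_two
  have := (summable_nat_add_iff 1).mpr h
  simpa using this

lemma summable_of_le_base (f : ℕ → ℝ) (C : ℝ)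
    (h0 : ∀ m, 0 ≤ f m) (h1 : ∀ m, f m ≤ C / ((m : ℝ) + 1) ^ 2) : Summable f := by
  have hC : Summable (fun m : ℕ => C / ((m : ℝ) + 1) ^ 2) := by
    simpa [div_eq_mul_inv, mul_comm, one_div] using sum_base.mul_left C
  exact Summable.of_nonneg_of_le h0 h1 hC

lemma summable_T (p : ℕ) (hp : 1 ≤ p) :
    Summable (fun m : ℕ => 1 / (((m : ℝ) + 1) ^ p * ((m : ℝ) + 2) ^ p)) := by
  refine summable_of_le_base _ 1 (fun m => by positivity) (fun m => ?_)
  rw [one_div, one_div]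
  refine inv_anti₀ (by positivity) ?_
  have h1 : ((m : ℝ) + 1) ≤ ((m : ℝ) + 1) ^ p :=
    le_self_pow₀ (by nlinarith [Nat.cast_nonneg (α := ℝ) m]) (by omega)
  have h2 : ((m : ℝ) + 1) ≤ ((m : ℝ) + 2) ^ p := by
    calc ((m : ℝ) + 1) ≤ (m : ℝ) + 2 := by linarith
    _ ≤ ((m : ℝ) + 2) ^ p := le_self_pow₀ (by nlinarith [Nat.cast_nonneg (α := ℝ) m]) (by omega)
  nlinarith [Nat.cast_nonneg (α := ℝ) m]

lemma hasSum_T (k : ℕ) :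
    HasSum (fun m : ℕ => 1 / (bb m) ^ (k + 1)) (T (k + 1) / 4 ^ (k + 1)) := by
  have hs := (summable_T (k + 1) (by omega)).hasSum
  have := hs.div_const ((4 : ℝ) ^ (k + 1))
  rw [show T (k+1) = ∑' n : ℕ, 1 / (((n : ℝ) + 1) ^ (k+1) * ((n : ℝ) + 2) ^ (k+1)) from rfl]
  convert this using 2 with m
  · rfl
  unfold bb
  rw [mul_pow, mul_pow, div_div]
  ring_nf

lemma geomAux (M : ℕ) (a y : ℝ) (ha : 0 < a) (hy : 0 ≤ y) :
    1 / (a + y) = (∑ k ∈ Finset.range (M + 1), (-1 : ℝ) ^ k * y ^ k / a ^ (k + 1))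
      + (-1 : ℝ) ^ (M + 1) * y ^ (M + 1) / (a ^ (M + 1) * (a + y)) := by
  induction M with
  | zero =>
    have h1 : a + y ≠ 0 := by positivity
    have h2 : a ≠ 0 := ne_of_gt ha
    rw [Finset.sum_range_one]
    field_simp
    ring
  | succ M ih =>
    rw [Finset.sum_range_succ, add_assoc, ih]
    congr 1
    have h1 : a + y ≠ 0 := by positivity
    have h2 : a ≠ 0 := ne_of_gt ha
    field_simp
    ring

lemma summable_oddsq : Summable (fun n : ℕ => 1 / ((2 * (n : ℝ) + 1) ^ 2)) := by
  refine summable_of_le_base _ 1 (fun m => by positivity) (fun m => ?_)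
  have : ((m : ℝ) + 1) ^ 2 ≤ (2 * (m : ℝ) + 1) ^ 2 := by
    nlinarith [Nat.cast_nonneg (α := ℝ) m]
  rw [one_div, one_div]
  exact inv_anti₀ (by positivity) this

lemma hasSum_oddsq : HasSum (fun n : ℕ => 1 / ((2 * (n : ℝ) + 1) ^ 2)) (π ^ 2 / 8) := by
  set f : ℕ → ℝ := fun n => 1 / (n : ℝ) ^ 2 with hf
  have htot : HasSum f (π ^ 2 / 6) := hasSum_zeta_two
  have heq : (fun k : ℕ => f (2 * k)) = fun k => 1 / 4 * f k := by
    funext k; simp only [hf]; push_cast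
    rw [mul_pow, one_div, one_div, mul_inv]; norm_num
  have heven : HasSum (fun k : ℕ => f (2 * k)) (π ^ 2 / 24) := by
    rw [heq]; convert htot.mul_left (1 / 4) using 1
    · rfl
    ring
  have hoeq : (fun k : ℕ => f (2 * k + 1)) = fun n : ℕ => 1 / ((2 * (n : ℝ) + 1) ^ 2) := by
    funext k; simp only [hf]; push_cast; ring_nf
  have hodd : Summable fun k : ℕ => f (2 * k + 1) := by rw [hoeq]; exact summable_oddsq
  have key := tsum_even_add_odd heven.summable hodd
  rw [heven.tsum_eq, htot.tsum_eq] at key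
  have hval : (∑' k, f (2 * k + 1)) = π ^ 2 / 8 := by linarith
  have h2 := hodd.hasSum
  rw [hval, hoeq] at h2
  exact h2

noncomputable def RR (M : ℕ) (y : ℝ) : ℝ := ∑' m : ℕ, 1 / ((bb m) ^ (M + 1) * (bb m + y))

lemma RR_term_le (M : ℕ) {y : ℝ} (hy : 0 ≤ y) (m : ℕ) :
    1 / ((bb m) ^ (M + 1) * (bb m + y)) ≤ 1 / ((m : ℝ) + 1) ^ 2 := by
  rw [one_div, one_div]
  refine inv_anti₀ (by positivity) ?_
  have h1 : bb m ≤ (bb m) ^ (M + 1) := le_self_pow₀ (bb_ge_one m) (by omega)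
  have h2 : (1 : ℝ) ≤ bb m + y := by linarith [bb_ge_one m]
  calc ((m : ℝ) + 1) ^ 2 ≤ bb m := bb_ge m
  _ = bb m * 1 := by ring
  _ ≤ (bb m) ^ (M + 1) * (bb m + y) := by
      have := bb_pos m
      exact mul_le_mul h1 h2 zero_le_one (by positivity)

lemma summable_RR (M : ℕ) {y : ℝ} (hy : 0 ≤ y) :
    Summable (fun m : ℕ => 1 / ((bb m) ^ (M + 1) * (bb m + y))) := by
  refine summable_of_le_base _ 1 (fun m => by have := bb_pos m; positivity) (fun m => ?_)
  simpa using RR_term_le M hy m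

lemma RR_nonneg (M : ℕ) {y : ℝ} (hy : 0 ≤ y) : 0 ≤ RR M y :=
  tsum_nonneg (fun m => by have := bb_pos m; positivity)

lemma hasSum_tail (M : ℕ) {y : ℝ} (hy : 0 ≤ y) :
    HasSum (fun m : ℕ => 1 / (bb m + y))
      ((∑ k ∈ Finset.range (M + 1), (-1 : ℝ) ^ k * y ^ k * (T (k + 1) / 4 ^ (k + 1)))
        + (-1 : ℝ) ^ (M + 1) * y ^ (M + 1) * RR M y) := by
  have hmain : HasSum (fun m : ℕ => ∑ k ∈ Finset.range (M + 1),
      (-1 : ℝ) ^ k * y ^ k / (bb m) ^ (k + 1))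
      (∑ k ∈ Finset.range (M + 1), (-1 : ℝ) ^ k * y ^ k * (T (k + 1) / 4 ^ (k + 1))) := by
    refine hasSum_sum (fun k _ => ?_)
    have := (hasSum_T k).mul_left ((-1 : ℝ) ^ k * y ^ k)
    convert this using 2 with m
    · rfl
    rw [mul_one_div]
  have hrem : HasSum (fun m : ℕ => (-1 : ℝ) ^ (M + 1) * y ^ (M + 1) *
      (1 / ((bb m) ^ (M + 1) * (bb m + y))))
      ((-1 : ℝ) ^ (M + 1) * y ^ (M + 1) * RR M y) :=
    ((summable_RR M hy).hasSum).mul_left _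
  have := hmain.add hrem
  convert this using 2 with m
  rw [geomAux M (bb m) y (bb_pos m) hy, mul_one_div]

lemma summable_oddfrac {x : ℝ} (hx : x ^ 2 < 1) :
    Summable (fun n : ℕ => 1 / ((2 * (n : ℝ) + 1) ^ 2 - x ^ 2)) := by
  refine summable_of_le_base _ (1 / (1 - x ^ 2)) (fun m => ?_) (fun m => ?_)
  · have h : (0:ℝ) < (2 * (m : ℝ) + 1) ^ 2 - x ^ 2 := by nlinarith [Nat.cast_nonneg (α := ℝ) m]
    positivity
  · rw [div_div, one_div, one_div]
    have h1 : (0 : ℝ) < 1 - x ^ 2 := by nlinarith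
    refine inv_anti₀ (by positivity) ?_
    nlinarith [Nat.cast_nonneg (α := ℝ) m, sq_nonneg x, sq_nonneg ((m : ℝ) * x),
      mul_nonneg (sq_nonneg x) (Nat.cast_nonneg (α := ℝ) m)]

lemma prod_split (x : ℝ) (n : ℕ) :
    ∏ j ∈ Finset.range (2 * n), (1 - x ^ 2 / ((j : ℝ) + 1) ^ 2)
    = (∏ j ∈ Finset.range n, (1 - x ^ 2 / (2 * (j : ℝ) + 1) ^ 2)) *
      ∏ j ∈ Finset.range n, (1 - x ^ 2 / (2 * (j : ℝ) + 2) ^ 2) := by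
  induction n with
  | zero => simp
  | succ n ih =>
    rw [show 2 * (n + 1) = (2 * n + 1) + 1 by omega, Finset.prod_range_succ,
      Finset.prod_range_succ, Finset.prod_range_succ, Finset.prod_range_succ, ih]
    push_cast
    ring

lemma cos_prod {x : ℝ} (hx : x ^ 2 < 1) :
    Tendsto (fun n : ℕ => ∏ j ∈ Finset.range n, (1 - x ^ 2 / (2 * (j : ℝ) + 1) ^ 2)) atTop
      (𝓝 (cos (π * x / 2))) := by
  rcases eq_or_ne x 0 with h0 | h0
  · subst h0
    simp only [ne_eq, OfNat.ofNat_ne_zero, not_false_eq_true, zero_pow, zero_div, sub_zero,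
      Finset.prod_const_one, mul_zero, zero_div, Real.cos_zero]
    exact tendsto_const_nhds
  · have hx1 : |x| < 1 := abs_lt.mpr ⟨by nlinarith, by nlinarith⟩
    have hxlt : x < 1 := by nlinarith
    have hxgt : -1 < x := by nlinarith
    have h2n : Tendsto (fun n : ℕ => 2 * n) atTop atTop :=
      Filter.tendsto_atTop_atTop_of_monotone (fun a b h => by omega) (fun b => ⟨b, by omega⟩)
    have h1 : Tendsto (fun n : ℕ =>
        π * x * ∏ j ∈ Finset.range (2 * n), ((1 : ℝ) - x ^ 2 / ((j : ℝ) + 1) ^ 2)) atTop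
        (𝓝 (sin (π * x))) := (Real.tendsto_euler_sin_prod x).comp h2n
    have h2 := Real.tendsto_euler_sin_prod (x / 2)
    have hBfac : ∀ j : ℕ, (1 : ℝ) - (x / 2) ^ 2 / ((j : ℝ) + 1) ^ 2
        = 1 - x ^ 2 / (2 * (j : ℝ) + 2) ^ 2 := by
      intro j
      have hj : ((j : ℝ) + 1) ≠ 0 := by positivity
      field_simp
    have h2' : Tendsto (fun n : ℕ =>
        π * x / 2 * ∏ j ∈ Finset.range n, ((1 : ℝ) - x ^ 2 / (2 * (j : ℝ) + 2) ^ 2)) atTop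
        (𝓝 (sin (π * x / 2))) := by
      have heq : (fun n : ℕ => π * x / 2 * ∏ j ∈ Finset.range n,
          ((1 : ℝ) - x ^ 2 / (2 * (j : ℝ) + 2) ^ 2))
          = fun n : ℕ => π * (x / 2) * ∏ j ∈ Finset.range n,
          ((1 : ℝ) - (x / 2) ^ 2 / ((j : ℝ) + 1) ^ 2) := by
        funext n
        rw [show π * x / 2 = π * (x / 2) by ring]
        exact congrArg _ (Finset.prod_congr rfl fun j _ => (hBfac j).symm)
      rw [heq, show π * x / 2 = π * (x / 2) by ring]
      exact h2
    have hsinhalf : sin (π * x / 2) ≠ 0 := by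
      rcases lt_or_gt_of_ne h0 with hneg | hpos
      · have : sin (π * (-x) / 2) > 0 := by
          apply Real.sin_pos_of_pos_of_lt_pi
          · have := Real.pi_pos; nlinarith
          · have := Real.pi_pos; nlinarith
        have hodd : sin (π * x / 2) = - sin (π * (-x) / 2) := by
          rw [show π * x / 2 = -(π * (-x) / 2) by ring, Real.sin_neg]
        rw [hodd]; linarith
      · have : sin (π * x / 2) > 0 := by
          apply Real.sin_pos_of_pos_of_lt_pi
          · have := Real.pi_pos; nlinarith
          · have := Real.pi_pos; nlinarith
        linarith
    have hquot := h1.div h2' hsinhalf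
    have hBpos : ∀ n : ℕ, (0 : ℝ) <
        ∏ j ∈ Finset.range n, ((1 : ℝ) - x ^ 2 / (2 * (j : ℝ) + 2) ^ 2) := by
      intro n
      apply Finset.prod_pos
      intro j _
      have h1' : x ^ 2 < (2 * (j : ℝ) + 2) ^ 2 := by nlinarith [Nat.cast_nonneg (α := ℝ) j]
      have h2'' : (0 : ℝ) < (2 * (j : ℝ) + 2) ^ 2 := by positivity
      rw [sub_pos, div_lt_one h2'']
      exact h1'
    have hπx : π * x ≠ 0 := mul_ne_zero Real.pi_ne_zero h0
    have hquot2 : Tendsto (fun n : ℕ =>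
        2 * ∏ j ∈ Finset.range n, ((1 : ℝ) - x ^ 2 / (2 * (j : ℝ) + 1) ^ 2)) atTop
        (𝓝 (sin (π * x) / sin (π * x / 2))) := by
      refine hquot.congr fun n => ?_
      simp only [Pi.div_apply]
      rw [prod_split]
      have hB := (hBpos n).ne'
      rw [div_eq_iff (mul_ne_zero (div_ne_zero hπx two_ne_zero) hB)]
      ring
    have hval : sin (π * x) / sin (π * x / 2) = 2 * cos (π * x / 2) := by
      have hs2 := Real.sin_two_mul (π * x / 2)
      rw [show 2 * (π * x / 2) = π * x by ring] at hs2
      rw [hs2]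
      field_simp
    rw [hval] at hquot2
    have h3 := hquot2.div_const 2
    have h4 : Tendsto (fun n : ℕ =>
        ∏ j ∈ Finset.range n, ((1 : ℝ) - x ^ 2 / (2 * (j : ℝ) + 1) ^ 2)) atTop
        (𝓝 (2 * cos (π * x / 2) / 2)) := h3.congr fun n => by ring
    rw [show 2 * cos (π * x / 2) / 2 = cos (π * x / 2) by ring] at h4
    exact h4

set_option maxHeartbeats 1000000 in
lemma tan_series {x : ℝ} (hx : x ^ 2 < 1) :
    π / 2 * Real.tan (π * x / 2) = ∑' j : ℕ, 2 * x / ((2 * (j : ℝ) + 1) ^ 2 - x ^ 2) := by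
  have hx1 : |x| < 1 := abs_lt.mpr ⟨by nlinarith, by nlinarith⟩
  set r : ℝ := (1 + |x|) / 2 with hr
  have hr0 : 0 < r := by positivity
  have hr1 : r < 1 := by rw [hr]; linarith
  have hxr : |x| < r := by rw [hr]; linarith [abs_nonneg x]
  have hr2 : r ^ 2 < 1 := by nlinarith
  set g : ℕ → ℝ → ℝ := fun j y => Real.log (1 - y ^ 2 / (2 * (j : ℝ) + 1) ^ 2) with hg_def
  set g' : ℕ → ℝ → ℝ := fun j y => -(2 * y) / ((2 * (j : ℝ) + 1) ^ 2 - y ^ 2) with hg'_def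
  set u : ℕ → ℝ := fun j => 2 / (1 - r ^ 2) * (1 / ((j : ℝ) + 1) ^ 2) with hu_def
  have hu : Summable u := sum_base.mul_left _
  -- basic facts for y in the ball
  have hball : ∀ y : ℝ, y ∈ Metric.ball (0 : ℝ) r → y ^ 2 < 1 := by
    intro y hy
    rw [Metric.mem_ball, Real.dist_eq, sub_zero] at hy
    nlinarith [abs_nonneg y, le_abs_self y, neg_abs_le y]
  have hdenom : ∀ (j : ℕ) (y : ℝ), y ^ 2 < 1 → (0 : ℝ) < (2 * (j : ℝ) + 1) ^ 2 - y ^ 2 := by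
    intro j y hy
    nlinarith [Nat.cast_nonneg (α := ℝ) j]
  have hfacpos : ∀ (j : ℕ) (y : ℝ), y ^ 2 < 1 → (0 : ℝ) < 1 - y ^ 2 / (2 * (j : ℝ) + 1) ^ 2 := by
    intro j y hy
    have h1 := hdenom j y hy
    have h2 : (0 : ℝ) < (2 * (j : ℝ) + 1) ^ 2 := by positivity
    rw [sub_pos, div_lt_one h2]
    linarith
  have hg : ∀ (j : ℕ) (y : ℝ), y ∈ Metric.ball (0 : ℝ) r → HasDerivAt (g j) (g' j y) y := by
    intro j y hy
    have hy2 := hball y hy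
    have hO : (0 : ℝ) < (2 * (j : ℝ) + 1) ^ 2 := by positivity
    have hc : HasDerivAt (fun y : ℝ => 1 - y ^ 2 / (2 * (j : ℝ) + 1) ^ 2)
        (-(2 * y / (2 * (j : ℝ) + 1) ^ 2)) y := by
      have := ((hasDerivAt_pow 2 y).div_const ((2 * (j : ℝ) + 1) ^ 2)).const_sub 1
      simpa using this
    have hlog := hc.log (ne_of_gt (hfacpos j y hy2))
    convert hlog using 1
    rw [hg'_def]
    have hd := hdenom j y hy2
    field_simp
  have hg' : ∀ (j : ℕ) (y : ℝ), y ∈ Metric.ball (0 : ℝ) r → ‖g' j y‖ ≤ u j := by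
    intro j y hy
    rw [Metric.mem_ball, Real.dist_eq, sub_zero] at hy
    have hy2 : y ^ 2 < 1 := by nlinarith [abs_nonneg y, le_abs_self y, neg_abs_le y]
    have hd := hdenom j y hy2
    have hkey : (1 - r ^ 2) * ((j : ℝ) + 1) ^ 2 ≤ (2 * (j : ℝ) + 1) ^ 2 - y ^ 2 := by
      have hy2r : y ^ 2 ≤ r ^ 2 := by nlinarith [abs_nonneg y, le_abs_self y, neg_abs_le y]
      nlinarith [Nat.cast_nonneg (α := ℝ) j, sq_nonneg r, sq_nonneg ((j : ℝ) * r),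
        mul_nonneg (sq_nonneg r) (Nat.cast_nonneg (α := ℝ) j)]
    rw [hg'_def]
    rw [Real.norm_eq_abs, abs_div, abs_neg, abs_of_pos hd, hu_def]
    have h2y : |2 * y| ≤ 2 := by
      rw [abs_mul]
      simp only [abs_two]
      nlinarith
    have hr2' : (0 : ℝ) < 1 - r ^ 2 := by nlinarith
    have hA : (0 : ℝ) ≤ (1 - r ^ 2) * ((j : ℝ) + 1) ^ 2 := by positivity
    show |2 * y| / ((2 * (j : ℝ) + 1) ^ 2 - y ^ 2) ≤ 2 / (1 - r ^ 2) * (1 / ((j : ℝ) + 1) ^ 2)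
    rw [div_mul_div_comm, mul_one, div_le_div_iff₀ hd (by positivity)]
    nlinarith [mul_nonneg (sub_nonneg.mpr h2y) hA, hkey]
  have hg0 : Summable fun j : ℕ => g j 0 := by
    have : (fun j : ℕ => g j 0) = fun _ => (0 : ℝ) := by
      funext j; rw [hg_def]; simp
    rw [this]; exact summable_zero
  have hxmem : x ∈ Metric.ball (0 : ℝ) r := by
    rw [Metric.mem_ball, Real.dist_eq, sub_zero]; exact hxr
  have h0mem : (0 : ℝ) ∈ Metric.ball (0 : ℝ) r := Metric.mem_ball_self hr0
  have hpre := (convex_ball (0 : ℝ) r).isPreconnected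
  have hderiv : HasDerivAt (fun z => ∑' j : ℕ, g j z) (∑' j : ℕ, g' j x) x :=
    hasDerivAt_tsum_of_isPreconnected hu Metric.isOpen_ball hpre hg hg' h0mem hg0 hxmem
  have hSummableAt : ∀ y ∈ Metric.ball (0 : ℝ) r, Summable fun j : ℕ => g j y :=
    fun y hy => summable_of_summable_hasDerivAt_of_isPreconnected hu Metric.isOpen_ball hpre
      hg hg' h0mem hg0 hy
  have hGeq : ∀ y ∈ Metric.ball (0 : ℝ) r, (∑' j : ℕ, g j y) = Real.log (cos (π * y / 2)) := by
    intro y hy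
    have hy2 := hball y hy
    have hy1 : |y| < 1 := by
      rw [Metric.mem_ball, Real.dist_eq, sub_zero] at hy; linarith
    have hcos : 0 < cos (π * y / 2) := by
      apply Real.cos_pos_of_mem_Ioo
      constructor
      · have := Real.pi_pos
        have := neg_abs_le y
        rw [show π * y / 2 = π / 2 * y by ring]
        nlinarith [abs_nonneg y, le_abs_self y]
      · have := Real.pi_pos
        rw [show π * y / 2 = π / 2 * y by ring]
        nlinarith [le_abs_self y]
    have htend := cos_prod hy2
    have hlogt : Tendsto (fun n : ℕ =>
        Real.log (∏ j ∈ Finset.range n, (1 - y ^ 2 / (2 * (j : ℝ) + 1) ^ 2))) atTop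
        (𝓝 (Real.log (cos (π * y / 2)))) :=
      ((Real.continuousAt_log (ne_of_gt hcos)).tendsto).comp htend
    have hps : ∀ n : ℕ, Real.log (∏ j ∈ Finset.range n, (1 - y ^ 2 / (2 * (j : ℝ) + 1) ^ 2))
        = ∑ j ∈ Finset.range n, g j y := by
      intro n
      rw [Real.log_prod]
      intro j _
      exact ne_of_gt (hfacpos j y hy2)
    rw [funext hps] at hlogt
    have h2 := (hSummableAt y hy).hasSum.tendsto_sum_nat
    exact tendsto_nhds_unique h2 hlogt
  have hEq : (fun z => Real.log (cos (π * z / 2))) =ᶠ[𝓝 x] fun z => ∑' j : ℕ, g j z := by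
    filter_upwards [Metric.isOpen_ball.mem_nhds hxmem] with y hy
    exact (hGeq y hy).symm
  have hderiv2 : HasDerivAt (fun z => Real.log (cos (π * z / 2))) (∑' j : ℕ, g' j x) x :=
    hderiv.congr_of_eventuallyEq hEq
  have hcosx : 0 < cos (π * x / 2) := by
    apply Real.cos_pos_of_mem_Ioo
    constructor
    · have := Real.pi_pos
      rw [show π * x / 2 = π / 2 * x by ring]
      nlinarith [abs_nonneg x, le_abs_self x, neg_abs_le x]
    · have := Real.pi_pos
      rw [show π * x / 2 = π / 2 * x by ring]
      nlinarith [le_abs_self x]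
  have hinner : HasDerivAt (fun z : ℝ => π * z / 2) (π / 2) x := by
    have := ((hasDerivAt_id x).const_mul π).div_const 2
    simpa using this
  have hcosd : HasDerivAt (fun z : ℝ => cos (π * z / 2)) (-Real.sin (π * x / 2) * (π / 2)) x :=
    hinner.cos
  have hlogd : HasDerivAt (fun z : ℝ => Real.log (cos (π * z / 2)))
      (-(π / 2) * Real.tan (π * x / 2)) x := by
    have := hcosd.log (ne_of_gt hcosx)
    convert this using 1
    rw [Real.tan_eq_sin_div_cos]
    ring
  have huniq := hlogd.unique hderiv2
  have hterm : ∀ j : ℕ, g' j x = -(2 * x / ((2 * (j : ℝ) + 1) ^ 2 - x ^ 2)) := by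
    intro j
    rw [hg'_def]
    ring
  rw [funext hterm, tsum_neg] at huniq
  linarith [huniq]

lemma tanc_eq {x : ℝ} (hx : x ^ 2 < 1) :
    tanc x = 8 / π ^ 2 * ∑' n : ℕ, 1 / ((2 * (n : ℝ) + 1) ^ 2 - x ^ 2) := by
  have hπ := Real.pi_ne_zero
  rcases eq_or_ne x 0 with h0 | h0
  · subst h0
    have h := hasSum_oddsq
    have hts : ∑' n : ℕ, 1 / ((2 * (n : ℝ) + 1) ^ 2 - (0:ℝ) ^ 2) = π ^ 2 / 8 := by
      rw [← h.tsum_eq]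
      congr 1; funext n; norm_num
    rw [show tanc 0 = 1 from if_pos rfl, hts]
    field_simp
  · have key := tan_series hx
    set S : ℝ := ∑' n : ℕ, 1 / ((2 * (n : ℝ) + 1) ^ 2 - x ^ 2) with hS_def
    have hmul : ∑' j : ℕ, 2 * x / ((2 * (j : ℝ) + 1) ^ 2 - x ^ 2) = 2 * x * S := by
      rw [hS_def, ← tsum_mul_left]
      congr 1; funext j; rw [mul_one_div]
    rw [hmul] at key
    have h2 : Real.tan (π * x / 2) = 2 * x * S / (π / 2) := by
      rw [eq_div_iff (by positivity : (π : ℝ) / 2 ≠ 0)]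
      linear_combination key
    rw [show tanc x = Real.tan (π * x / 2) / (π * x / 2) from if_neg h0, h2]
    field_simp
    ring

lemma key_split {x : ℝ} (hx : x ^ 2 < 1) :
    tanc x = 8 / π ^ 2 * (1 / (1 - x ^ 2) + ∑' m : ℕ, 1 / (bb m + (1 - x ^ 2))) := by
  rw [tanc_eq hx]
  congr 1
  rw [Summable.tsum_eq_zero_add (summable_oddfrac hx)]
  congr 1
  · norm_num
  · congr 1
    funext m
    have : (2 * ((m + 1 : ℕ) : ℝ) + 1) ^ 2 - x ^ 2 = bb m + (1 - x ^ 2) := by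
      simp only [bb]; push_cast; ring
    rw [this]

lemma basel_split : (π : ℝ) ^ 2 / 8 = 1 + ∑' m : ℕ, 1 / (bb m + 1) := by
  have h := hasSum_oddsq
  rw [← h.tsum_eq, Summable.tsum_eq_zero_add h.summable]
  congr 1
  · norm_num
  · congr 1
    funext m
    have : (2 * ((m + 1 : ℕ) : ℝ) + 1) ^ 2 = bb m + 1 := by
      simp only [bb]; push_cast; ring
    rw [this]

theorem tan_bounds_odd (N : ℕ) (H : ℝ)
    (hH : H = -(π ^ 2) / 8 +
      (1 + ∑ k ∈ Finset.range (2 * N + 1), (-1 : ℝ) ^ k * (T (k + 1) / 4 ^ (k + 1)))) :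
    0 < H ∧ H < T (2 * N + 2) / 4 ^ (2 * N + 2) ∧
    ∀ x : ℝ, -1 < x → x < 1 →
      8 / π ^ 2 * (1 / (1 - x ^ 2) +
          ∑ k ∈ Finset.range (2 * N + 2),
            (-1 : ℝ) ^ k * (T (k + 1) / 4 ^ (k + 1)) * (1 - x ^ 2) ^ k) ≤ tanc x ∧
      tanc x ≤ 8 / π ^ 2 * (1 / (1 - x ^ 2) +
          (∑ k ∈ Finset.range (2 * N + 1),
            (-1 : ℝ) ^ k * (T (k + 1) / 4 ^ (k + 1)) * (1 - x ^ 2) ^ k) -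
          H * (1 - x ^ 2) ^ (2 * N + 1)) := by

  have hRRpos : 0 < RR (2 * N) 1 := by
    refine Summable.tsum_pos (summable_RR (2 * N) zero_le_one) (fun m => ?_) 0 ?_
    · have := bb_pos m; positivity
    · have := bb_pos 0; positivity
  have htail1 := (hasSum_tail (2 * N) zero_le_one).tsum_eq
  have hodd1 : (-1 : ℝ) ^ (2 * N + 1) = -1 := Odd.neg_one_pow ⟨N, by ring⟩
  rw [hodd1] at htail1
  simp only [one_pow, mul_one, neg_one_mul, neg_mul] at htail1
  -- htail1 : ∑' m, 1/(bb m + 1) = Σ_{k<2N+1} (-1)^k * (T (k+1)/4^(k+1)) - RR (2N) 1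
  have hH' : H = RR (2 * N) 1 := by
    have hb := basel_split
    rw [htail1] at hb
    rw [hH]
    linarith
  refine ⟨by rw [hH']; exact hRRpos, ?_, ?_⟩
  · rw [hH']
    have hTsum := hasSum_T (2 * N + 1)
    rw [show 2 * N + 1 + 1 = 2 * N + 2 from rfl] at hTsum
    rw [← hTsum.tsum_eq]
    unfold RR
    refine Summable.tsum_lt_tsum_of_nonneg (i := 0) (fun m => ?_) (fun m => ?_) ?_ hTsum.summable
    · have := bb_pos m; positivity
    · have hb := bb_pos m
      rw [one_div, one_div]
      refine inv_anti₀ (by positivity) ?_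
      rw [show 2 * N + 1 + 1 = (2 * N + 1) + 1 from rfl, pow_succ]
      have : bb m ≤ bb m + 1 := by linarith
      nlinarith [pow_pos hb (2 * N + 1)]
    · have hb := bb_pos 0
      rw [one_div, one_div]
      refine inv_strictAnti₀ (by positivity) ?_
      rw [pow_succ]
      nlinarith [pow_pos hb (2 * N + 1)]
  · intro x hx1 hx2
    have hx : x ^ 2 < 1 := by nlinarith
    have hy0 : (0 : ℝ) < 1 - x ^ 2 := by nlinarith
    have hy1 : 1 - x ^ 2 ≤ 1 := by nlinarith [sq_nonneg x]
    have hkey := key_split hx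
    have hπ2 : (0 : ℝ) < 8 / π ^ 2 := by have := Real.pi_pos; positivity
    constructor
    · rw [hkey]
      refine mul_le_mul_of_nonneg_left ?_ hπ2.le
      have ht := (hasSum_tail (2 * N + 1) hy0.le).tsum_eq
      have heven : (-1 : ℝ) ^ (2 * N + 1 + 1) = 1 := Even.neg_one_pow ⟨N + 1, by ring⟩
      rw [heven, one_mul] at ht
      rw [ht]
      have hsumeq : ∑ k ∈ Finset.range (2 * N + 2),
          (-1 : ℝ) ^ k * (T (k + 1) / 4 ^ (k + 1)) * (1 - x ^ 2) ^ k
          = ∑ k ∈ Finset.range (2 * N + 1 + 1),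
          (-1 : ℝ) ^ k * (1 - x ^ 2) ^ k * (T (k + 1) / 4 ^ (k + 1)) :=
        Finset.sum_congr rfl fun k _ => by ring
      rw [hsumeq]
      have hrem : 0 ≤ (1 - x ^ 2) ^ (2 * N + 1 + 1) * RR (2 * N + 1) (1 - x ^ 2) :=
        mul_nonneg (pow_nonneg hy0.le _) (RR_nonneg _ hy0.le)
      linarith
    · rw [hkey]
      rw [show 8 / π ^ 2 * (1 / (1 - x ^ 2) +
          (∑ k ∈ Finset.range (2 * N + 1),
            (-1 : ℝ) ^ k * (T (k + 1) / 4 ^ (k + 1)) * (1 - x ^ 2) ^ k) -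
          H * (1 - x ^ 2) ^ (2 * N + 1))
          = 8 / π ^ 2 * ((1 / (1 - x ^ 2) +
          ((∑ k ∈ Finset.range (2 * N + 1),
            (-1 : ℝ) ^ k * (T (k + 1) / 4 ^ (k + 1)) * (1 - x ^ 2) ^ k) -
          H * (1 - x ^ 2) ^ (2 * N + 1)))) by ring]
      refine mul_le_mul_of_nonneg_left ?_ hπ2.le
      have ht := (hasSum_tail (2 * N) hy0.le).tsum_eq
      rw [hodd1] at ht
      rw [ht]
      have hsumeq : ∑ k ∈ Finset.range (2 * N + 1),
          (-1 : ℝ) ^ k * (T (k + 1) / 4 ^ (k + 1)) * (1 - x ^ 2) ^ k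
          = ∑ k ∈ Finset.range (2 * N + 1),
          (-1 : ℝ) ^ k * (1 - x ^ 2) ^ k * (T (k + 1) / 4 ^ (k + 1)) :=
        Finset.sum_congr rfl fun k _ => by ring
      rw [hsumeq]
      have hRRle : RR (2 * N) 1 ≤ RR (2 * N) (1 - x ^ 2) := by
        unfold RR
        refine Summable.tsum_le_tsum (fun m => ?_) (summable_RR _ zero_le_one) (summable_RR _ hy0.le)
        have hb := bb_pos m
        rw [one_div, one_div]
        refine inv_anti₀ (by positivity) ?_
        have h1 : bb m + (1 - x ^ 2) ≤ bb m + 1 := by linarith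
        nlinarith [pow_pos hb (2 * N + 1)]
      have hmul : H * (1 - x ^ 2) ^ (2 * N + 1)
          ≤ (1 - x ^ 2) ^ (2 * N + 1) * RR (2 * N) (1 - x ^ 2) := by
        rw [hH', mul_comm]
        exact mul_le_mul_of_nonneg_left hRRle (pow_nonneg hy0.le _)
      linarith
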